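/- Let M ≥ 2 be an integer, θ, d > 0 reals, and consider the birth-death chain on {0,1,...,M} with rates r(i,i+1) = θ(M-i)(i+d) and r(i,i-1) = θ i(M-i+d) for 1 ≤ i ≤ M-1, absorbed at 0 and M. Starting from state 1, the expected absorption time at {0,M} is at most exp(d(1+log M))·2(1+log M)/(θM). -/

import Mathlib

/-- For the birth-death chain on `{0,…,M}` with birth rates `a i = θ(M-i)(i+d)` and
death rates `b i = θ·i·(M-i+d)`, absorbed at `0` and `M`, the expected absorption
time starting from `1`, which is bounded above by
`∑_{n=1}^{M-1} (1/b n) ∏_{m=1}^{n-1} a m / b m`, is at most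
`exp(d(1+log M)) · 2(1+log M)/(θ M)`. -/
theorem stmt3 (M : ℕ) (hM : 2 ≤ M) (θ d : ℝ) (hθ : 0 < θ) (hd : 0 < d)
    (a b : ℕ → ℝ)
    (ha : ∀ i, a i = θ * ((M : ℝ) - i) * (i + d))
    (hb : ∀ i, b i = θ * (i : ℝ) * ((M : ℝ) - i + d))
    (E : ℝ)
    (hE : E ≤ ∑ n ∈ Finset.Icc 1 (M - 1), (1 / b n) * ∏ m ∈ Finset.Icc 1 (n - 1), a m / b m) :
    E ≤ Real.exp (d * (1 + Real.log M)) * (2 * (1 + Real.log M)) / (θ * M) := by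
  have hM2 : (2:ℝ) ≤ (M:ℝ) := by exact_mod_cast hM
  have hMpos : (0:ℝ) < M := by linarith
  have hlogM : 0 ≤ Real.log M := Real.log_nonneg (by linarith)
  -- harmonic sum bound
  have hH : ∑ m ∈ Finset.Icc 1 (M-1), (1/(m:ℝ)) ≤ 1 + Real.log M := by
    have h1 : ((harmonic (M-1) : ℚ) : ℝ) = ∑ m ∈ Finset.Icc 1 (M-1), (1/(m:ℝ)) := by
      rw [harmonic_eq_sum_Icc]
      push_cast
      simp [one_div]
    have h2 := harmonic_le_one_add_log (M-1)
    have h3 : Real.log ((M-1 : ℕ) : ℝ) ≤ Real.log M := by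
      apply Real.log_le_log (by exact_mod_cast Nat.sub_pos_of_lt hM)
      exact_mod_cast Nat.sub_le M 1
    linarith [h1 ▸ h2]
  set K := Real.exp (d * (1 + Real.log M)) with hK
  have hKpos : 0 < K := Real.exp_pos _
  -- termwise bound
  have hterm : ∀ n ∈ Finset.Icc 1 (M-1),
      (1 / b n) * ∏ m ∈ Finset.Icc 1 (n - 1), a m / b m
        ≤ K * (1 / ((n:ℝ) * ((M:ℝ) - n)) / θ) := by
    intro n hn
    rw [Finset.mem_Icc] at hn
    have hn1 : (1:ℝ) ≤ n := by exact_mod_cast hn.1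
    have hnM : (n:ℝ) + 1 ≤ M := by
      have : n + 1 ≤ M := by omega
      exact_mod_cast this
    have hbpos : 0 < b n := by
      rw [hb]
      have : (0:ℝ) < (M:ℝ) - n + d := by linarith
      positivity
    have hprod : ∏ m ∈ Finset.Icc 1 (n-1), a m / b m ≤ K := by
      calc ∏ m ∈ Finset.Icc 1 (n-1), a m / b m
          ≤ ∏ m ∈ Finset.Icc 1 (n-1), Real.exp (d * (1/(m:ℝ))) := by
            apply Finset.prod_le_prod
            · intro m hm
              rw [Finset.mem_Icc] at hm
              have hm1 : (1:ℝ) ≤ m := by exact_mod_cast hm.1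
              have hmM : (m:ℝ) ≤ M := by
                have : m ≤ M := by omega
                exact_mod_cast this
              rw [ha, hb]
              have h1 : (0:ℝ) ≤ θ * ((M:ℝ) - m) * (m + d) := by
                have : (0:ℝ) ≤ (M:ℝ) - m := by linarith
                positivity
              have h2 : (0:ℝ) < θ * (m:ℝ) * ((M:ℝ) - m + d) := by
                have : (0:ℝ) < (M:ℝ) - m + d := by linarith
                positivity
              positivity
            · intro m hm
              rw [Finset.mem_Icc] at hm
              have hm1 : (1:ℝ) ≤ m := by exact_mod_cast hm.1
              have hmM : (m:ℝ) ≤ M := by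
                have : m ≤ M := by omega
                exact_mod_cast this
              have hmpos : (0:ℝ) < m := by linarith
              have hbm : 0 < b m := by
                rw [hb]
                have : (0:ℝ) < (M:ℝ) - m + d := by linarith
                positivity
              have hstep : a m / b m ≤ 1 + d * (1/(m:ℝ)) := by
                rw [div_le_iff₀ hbm, ha, hb]
                have hMm : (0:ℝ) ≤ (M:ℝ) - m := by linarith
                have key : θ * ((M:ℝ) - m) * (m + d) ≤ θ * ((M:ℝ) - m + d) * (m + d) := by
                  nlinarith [mul_nonneg (mul_nonneg hθ.le hd.le) (by linarith : (0:ℝ) ≤ (m:ℝ) + d)]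
                have expand : (1 + d * (1/(m:ℝ))) * (θ * (m:ℝ) * ((M:ℝ) - m + d))
                    = θ * ((M:ℝ) - m + d) * (m + d) := by
                  field_simp
                linarith [expand ▸ key]
              calc a m / b m ≤ 1 + d * (1/(m:ℝ)) := hstep
                _ ≤ Real.exp (d * (1/(m:ℝ))) := by
                    have := Real.add_one_le_exp (d * (1/(m:ℝ)))
                    linarith
        _ = Real.exp (∑ m ∈ Finset.Icc 1 (n-1), d * (1/(m:ℝ))) := by
            rw [Real.exp_sum]
        _ ≤ K := by
            rw [hK, Real.exp_le_exp, ← Finset.mul_sum]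
            apply mul_le_mul_of_nonneg_left _ hd.le
            calc ∑ m ∈ Finset.Icc 1 (n-1), (1/(m:ℝ))
                ≤ ∑ m ∈ Finset.Icc 1 (M-1), (1/(m:ℝ)) := by
                  apply Finset.sum_le_sum_of_subset_of_nonneg
                  · apply Finset.Icc_subset_Icc_right; omega
                  · intro m _ _; positivity
              _ ≤ 1 + Real.log M := hH
    have hb_le : (1 / b n) ≤ 1 / ((n:ℝ) * ((M:ℝ) - n)) / θ := by
      rw [div_div]
      apply one_div_le_one_div_of_le
      · have h1 : (0:ℝ) < (M:ℝ) - n := by linarith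
        positivity
      · rw [hb]
        nlinarith [mul_nonneg (mul_nonneg hθ.le hd.le) (by linarith : (0:ℝ) ≤ (n:ℝ))]
    have hppos : 0 ≤ ∏ m ∈ Finset.Icc 1 (n-1), a m / b m := by
      apply Finset.prod_nonneg
      intro m hm
      rw [Finset.mem_Icc] at hm
      have hm1 : (1:ℝ) ≤ m := by exact_mod_cast hm.1
      have hmM : (m:ℝ) ≤ M := by
        have : m ≤ M := by omega
        exact_mod_cast this
      rw [ha, hb]
      have h1 : (0:ℝ) ≤ (M:ℝ) - m := by linarith
      have h2 : (0:ℝ) < (M:ℝ) - m + d := by linarith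
      positivity
    calc (1 / b n) * ∏ m ∈ Finset.Icc 1 (n-1), a m / b m
        ≤ (1 / ((n:ℝ) * ((M:ℝ) - n)) / θ) * K := by
          apply mul_le_mul hb_le hprod hppos
          have h1 : (0:ℝ) < (M:ℝ) - n := by linarith
          positivity
      _ = K * (1 / ((n:ℝ) * ((M:ℝ) - n)) / θ) := by ring
  -- now sum everything
  have hsum : ∑ n ∈ Finset.Icc 1 (M-1), (1 / b n) * ∏ m ∈ Finset.Icc 1 (n-1), a m / b m
      ≤ K * (∑ n ∈ Finset.Icc 1 (M-1), 1 / ((n:ℝ) * ((M:ℝ) - n))) / θ := by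
    calc _ ≤ ∑ n ∈ Finset.Icc 1 (M-1), K * (1 / ((n:ℝ) * ((M:ℝ) - n)) / θ) :=
          Finset.sum_le_sum hterm
      _ = K * (∑ n ∈ Finset.Icc 1 (M-1), 1 / ((n:ℝ) * ((M:ℝ) - n))) / θ := by
          rw [Finset.mul_sum, Finset.sum_div]
          apply Finset.sum_congr rfl
          intro n _
          ring
  -- the key sum bound
  have hsym : ∑ n ∈ Finset.Icc 1 (M-1), (1:ℝ) / ((M:ℝ) - n)
      = ∑ n ∈ Finset.Icc 1 (M-1), (1:ℝ) / (n:ℝ) := by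
    apply Finset.sum_nbij' (fun n => M - n) (fun n => M - n)
    · intro n hn; rw [Finset.mem_Icc] at hn ⊢; omega
    · intro n hn; rw [Finset.mem_Icc] at hn ⊢; omega
    · intro n hn; rw [Finset.mem_Icc] at hn; omega
    · intro n hn; rw [Finset.mem_Icc] at hn; omega
    · intro n hn
      rw [Finset.mem_Icc] at hn
      have hnle : n ≤ M := by omega
      rw [Nat.cast_sub hnle]
  have hsum2 : ∑ n ∈ Finset.Icc 1 (M-1), (1:ℝ) / ((n:ℝ) * ((M:ℝ) - n))
      ≤ 2 * (1 + Real.log M) / M := by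
    have heq : ∑ n ∈ Finset.Icc 1 (M-1), (1:ℝ) / ((n:ℝ) * ((M:ℝ) - n))
        = (1/(M:ℝ)) * (∑ n ∈ Finset.Icc 1 (M-1), (1:ℝ)/(n:ℝ)
          + ∑ n ∈ Finset.Icc 1 (M-1), (1:ℝ)/((M:ℝ) - n)) := by
      rw [← Finset.sum_add_distrib, Finset.mul_sum]
      apply Finset.sum_congr rfl
      intro n hn
      rw [Finset.mem_Icc] at hn
      have hn1 : (1:ℝ) ≤ n := by exact_mod_cast hn.1
      have hnM : (n:ℝ) + 1 ≤ M := by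
        have : n + 1 ≤ M := by omega
        exact_mod_cast this
      have h1 : (0:ℝ) < (M:ℝ) - n := by linarith
      field_simp
      ring
    rw [heq, hsym]
    have : ∑ n ∈ Finset.Icc 1 (M-1), (1:ℝ)/(n:ℝ) + ∑ n ∈ Finset.Icc 1 (M-1), (1:ℝ)/(n:ℝ)
        ≤ 2 * (1 + Real.log M) := by linarith
    calc (1/(M:ℝ)) * (∑ n ∈ Finset.Icc 1 (M-1), (1:ℝ)/(n:ℝ)
          + ∑ n ∈ Finset.Icc 1 (M-1), (1:ℝ)/(n:ℝ))
        ≤ (1/(M:ℝ)) * (2 * (1 + Real.log M)) := by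
          apply mul_le_mul_of_nonneg_left this (by positivity)
      _ = 2 * (1 + Real.log M) / M := by ring
  -- combine
  calc E ≤ ∑ n ∈ Finset.Icc 1 (M-1), (1 / b n) * ∏ m ∈ Finset.Icc 1 (n-1), a m / b m := hE
    _ ≤ K * (∑ n ∈ Finset.Icc 1 (M-1), 1 / ((n:ℝ) * ((M:ℝ) - n))) / θ := hsum
    _ ≤ K * (2 * (1 + Real.log M) / M) / θ := by
        gcongr
    _ = K * (2 * (1 + Real.log M)) / (θ * M) := by
        field_simp
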